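/- Let s, α be real numbers with s ≠ 0 and cos α ≠ 0, let H = s • !![Complex.I * Real.sin α, 1; 1, -Complex.I * Real.sin α], and set t = π/(2·s·cos α). Then (cos α) • exp(−Complex.I · t • H) = !![Real.sin α, -Complex.I; -Complex.I, -Real.sin α], i.e. up to the positive scalar 1/cos α the time-evolution operator at this time equals the simulated PT evolution operator U_α. -/

import Mathlib

open Matrix Complex

noncomputable section

/-- The PT-symmetric Hamiltonian `H = s • !![i sin α, 1; 1, -i sin α]`. -/
def Hpt (s α : ℝ) : Matrix (Fin 2) (Fin 2) ℂ :=
  (s : ℂ) • !![Complex.I * Real.sin α, 1; 1, -Complex.I * Real.sin α]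

/-- At time `t = π / (2 s cos α)`, up to the positive scalar `1 / cos α`, the
time-evolution operator generated by the PT-symmetric Hamiltonian equals the
simulated PT evolution operator `U_α = !![sin α, -i; -i, -sin α]`. -/
theorem stmt3 (s α : ℝ) (hs : s ≠ 0) (hc : Real.cos α ≠ 0)
    (t : ℝ) (ht : t = Real.pi / (2 * s * Real.cos α)) :
    (Real.cos α : ℂ) • NormedSpace.exp ((-(Complex.I * (t : ℂ))) • Hpt s α) =
      !![(Real.sin α : ℂ), -Complex.I; -Complex.I, -(Real.sin α : ℂ)] := by
  set c : ℂ := (Real.cos α : ℂ) with hcdef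
  set sn : ℂ := (Real.sin α : ℂ) with hsndef
  have hc' : c ≠ 0 := Complex.ofReal_ne_zero.mpr hc
  have hI : Complex.I ^ 2 = -1 := Complex.I_sq
  have hsc : sn ^ 2 + c ^ 2 = 1 := by
    rw [hcdef, hsndef]
    exact_mod_cast Real.sin_sq_add_cos_sq α
  set k : ℂ := Complex.I * (t : ℂ) * (s : ℂ) with hkdef
  have htsc : t * s * Real.cos α = Real.pi / 2 := by
    rw [ht]; field_simp
  have h2 : (t : ℂ) * (s : ℂ) * c = (Real.pi : ℂ) / 2 := by
    rw [hcdef]; exact_mod_cast htsc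
  have hkc : k * c = Complex.I * ((Real.pi : ℂ) / 2) := by
    rw [hkdef]; linear_combination Complex.I * h2
  set P : Matrix (Fin 2) (Fin 2) ℂ := !![1, 1; c - Complex.I * sn, -c - Complex.I * sn]
    with hP
  set Q : Matrix (Fin 2) (Fin 2) ℂ :=
    (-(2 * c))⁻¹ • !![-c - Complex.I * sn, -1; -(c - Complex.I * sn), 1] with hQ
  have hPQ : P * Q = 1 := by
    ext i j
    fin_cases i <;> fin_cases j <;>
      simp [hP, hQ, Matrix.mul_apply, Fin.sum_univ_two] <;>
      field_simp <;> ring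
  set D : Matrix (Fin 2) (Fin 2) ℂ := !![-(k * c), 0; 0, k * c] with hD
  set d : Fin 2 → ℂ := ![-(k * c), k * c] with hd
  have hDd : Matrix.diagonal d = D := by
    ext i j
    fin_cases i <;> fin_cases j <;> simp [hd, hD, Matrix.diagonal]
  have hA' : ((-(Complex.I * (t : ℂ))) • Hpt s α) * P = P * D := by
    rw [Hpt]
    ext i j
    fin_cases i <;> fin_cases j <;>
      simp [hP, hD, hkdef, Matrix.mul_apply, Fin.sum_univ_two] <;>
      (try simp only [← Complex.ofReal_sin, ← Complex.ofReal_cos]) <;>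
      (try rw [← hsndef]) <;> (try rw [← hcdef]) <;>
      first
        | ring1
        | linear_combination (Complex.I * (t:ℂ) * (s:ℂ)) * hsc +
            (-(Complex.I * (t:ℂ) * (s:ℂ) * sn ^ 2)) * hI
  have hA : (-(Complex.I * (t : ℂ))) • Hpt s α = P * Matrix.diagonal d * Q := by
    rw [hDd]
    calc (-(Complex.I * (t : ℂ))) • Hpt s α
        = ((-(Complex.I * (t : ℂ))) • Hpt s α) * (P * Q) := by rw [hPQ, mul_one]
      _ = (((-(Complex.I * (t : ℂ))) • Hpt s α) * P) * Q := by rw [mul_assoc]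
      _ = P * D * Q := by rw [hA']
  -- exponentiate
  have hQP : Q * P = 1 := by
    ext i j
    fin_cases i <;> fin_cases j <;>
      simp [hP, hQ, Matrix.mul_apply, Fin.sum_univ_two] <;>
      field_simp <;>
      first
        | linear_combination (-(2*c)) * hsc
        | linear_combination (2*c) * hsc
        | ring1
  set U : (Matrix (Fin 2) (Fin 2) ℂ)ˣ := ⟨P, Q, hPQ, hQP⟩ with hU
  have hexp : NormedSpace.exp ((-(Complex.I * (t : ℂ))) • Hpt s α)
      = P * Matrix.diagonal (fun i => NormedSpace.exp (d i)) * Q := by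
    rw [hA]
    have h3 : P * Matrix.diagonal d * Q
        = (U : Matrix (Fin 2) (Fin 2) ℂ) * Matrix.diagonal d *
            (↑U⁻¹ : Matrix (Fin 2) (Fin 2) ℂ) := rfl
    rw [h3, Matrix.exp_units_conj U, Matrix.exp_diagonal]
    have h4 : NormedSpace.exp d = fun i => NormedSpace.exp (d i) := by
      funext i; simp
    rw [h4]
    rfl
  -- compute the exponentials of the eigenvalues
  have hexpI : Complex.exp (Complex.I * ((Real.pi : ℂ) / 2)) = Complex.I := by
    rw [show Complex.I * ((Real.pi : ℂ) / 2) = ((Real.pi / 2 : ℝ) : ℂ) * Complex.I by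
      push_cast; ring]
    rw [Complex.exp_mul_I]
    simp [← Complex.ofReal_cos, ← Complex.ofReal_sin, Real.cos_pi_div_two,
      Real.sin_pi_div_two]
  have hd1 : NormedSpace.exp (d 1) = Complex.I := by
    have : d 1 = Complex.I * ((Real.pi : ℂ) / 2) := by rw [hd]; simp [hkc]
    rw [this, ← Complex.exp_eq_exp_ℂ, hexpI]
  have hd0 : NormedSpace.exp (d 0) = -Complex.I := by
    have : d 0 = -(Complex.I * ((Real.pi : ℂ) / 2)) := by rw [hd]; simp [hkc]
    rw [this, ← Complex.exp_eq_exp_ℂ, Complex.exp_neg, hexpI, Complex.inv_I]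
  set E : Matrix (Fin 2) (Fin 2) ℂ := !![-Complex.I, 0; 0, Complex.I] with hE
  have hED : Matrix.diagonal (fun i => NormedSpace.exp (d i)) = E := by
    rw [hE]
    ext i j
    fin_cases i <;> fin_cases j <;>
      simp [Matrix.diagonal_apply, hd0, hd1]
  have hfin : c • (P * E)
      = !![sn, -Complex.I; -Complex.I, -sn] * P := by
    ext i j
    fin_cases i <;> fin_cases j <;>
      simp [hP, hE, Matrix.mul_apply, Fin.sum_univ_two] <;>
      (try simp only [← Complex.ofReal_sin, ← Complex.ofReal_cos]) <;>
      (try rw [← hsndef]) <;> (try rw [← hcdef]) <;>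
      first
        | ring1
        | linear_combination (-sn) * hI
        | linear_combination (c * sn) * hI + (-Complex.I) * hsc
        | linear_combination (-(c * sn)) * hI + (-Complex.I) * hsc
  rw [hexp, hED]
  calc c • (P * E * Q) = (c • (P * E)) * Q := (smul_mul_assoc c (P * E) Q).symm
    _ = !![sn, -Complex.I; -Complex.I, -sn] * (P * Q) := by rw [hfin, mul_assoc]
    _ = !![sn, -Complex.I; -Complex.I, -sn] := by rw [hPQ, mul_one]
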